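/- arXiv:2305.09336 — 3 statements merged into one kernel-verified Lean document; each statement's English description precedes it below -/
import Mathlib

section
/- (Concentration of the marginal posterior.) Let A ⊆ ℝ^q be measurable and f : ℝ^p × A → ℝ be measurable with e^{f} integrable over ℝ^p × A and, for each η ∈ A, u ↦ e^{f(u,η)} integrable on ℝ^p with positive integral. Fix θ* ∈ ℝ^p, a map η ↦ θ_η ∈ ℝ^p, symmetric positive definite p × p matrices D and D_η (η ∈ A), radii r_η > 0 and r* > 0, and constants x ∈ ℝ, 0 < ν ≤ 1, C₀ ≥ 1, b ≥ 0. Assume: (i) for every η ∈ A, ∫_{{u : ‖D_η (u − θ_η)‖ > ν^{-1} r_η}} e^{f(u,η)} du ≤ e^{-x} ∫_{ℝ^p} e^{f(u,η)} du; (ii) for every η ∈ A, C₀^{-2} D² ⪯ D_η² ⪯ C₀² D² in the Loewner order; (iii) sup_{η ∈ A} ‖D (θ_η − θ*)‖ ≤ b; (iv) r_η ≤ C₀ r* for every η ∈ A. Then ∫∫_{{(u,η) ∈ ℝ^p × A : ‖D (u − θ*)‖ > C₀² ν^{-1} r* + b}} e^{f(u,η)} du dη ≤ e^{-x} ∫∫_{ℝ^p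 × A} e^{f(u,η)} du dη; that is, under the probability measure with density proportional to e^{f}, the θ-component X satisfies P(‖D (X − θ*)‖ > C₀² ν^{-1} r* + b) ≤ e^{-x}. -/
open MeasureTheory

open Matrix

lemma normsq_toEuclideanLin {p : ℕ} (M : Matrix (Fin p) (Fin p) ℝ) (hM : M.transpose = M)
    (v : EuclideanSpace ℝ (Fin p)) :
    ‖Matrix.toEuclideanLin M v‖ ^ 2 =
      (WithLp.equiv 2 (Fin p → ℝ) v) ⬝ᵥ ((M ^ 2) *ᵥ (WithLp.equiv 2 (Fin p → ℝ) v)) := by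
  set w := WithLp.equiv 2 (Fin p → ℝ) v with hw
  have h1 : ‖Matrix.toEuclideanLin M v‖ ^ 2 = (M *ᵥ w) ⬝ᵥ (M *ᵥ w) := by
    rw [← real_inner_self_eq_norm_sq]
    simp only [PiLp.inner_apply, RCLike.inner_apply, Matrix.toEuclideanLin_apply,
      dotProduct, mul_comm]
    simp [hw, mul_comm]
  rw [h1, pow_two, ← Matrix.mulVec_mulVec, Matrix.dotProduct_mulVec w M _,
    ← Matrix.mulVec_transpose, hM]

lemma norm_toEuclideanLin_le {p : ℕ} (M N : Matrix (Fin p) (Fin p) ℝ)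
    (hM : M.transpose = M) (hN : N.transpose = N) (c : ℝ) (hc : 1 ≤ c)
    (h : (N ^ 2 - c⁻¹ ^ 2 • M ^ 2).PosSemidef) (v : EuclideanSpace ℝ (Fin p)) :
    ‖Matrix.toEuclideanLin M v‖ ≤ c * ‖Matrix.toEuclideanLin N v‖ := by
  have hc0 : 0 < c := lt_of_lt_of_le one_pos hc
  set w := WithLp.equiv 2 (Fin p → ℝ) v with hw
  have h2 := h.dotProduct_mulVec_nonneg w
  have hstar : star w = w := by simp
  rw [hstar, Matrix.sub_mulVec, Matrix.smul_mulVec, dotProduct_sub,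
    dotProduct_smul] at h2
  have hMsq := normsq_toEuclideanLin M hM v
  have hNsq := normsq_toEuclideanLin N hN v
  rw [← hw] at hMsq hNsq
  have hkey : ‖Matrix.toEuclideanLin M v‖ ^ 2 ≤ c ^ 2 * ‖Matrix.toEuclideanLin N v‖ ^ 2 := by
    rw [hMsq, hNsq]
    rw [smul_eq_mul, sub_nonneg, inv_pow, inv_mul_le_iff₀ (by positivity : (0:ℝ) < c ^ 2)] at h2
    linarith
  nlinarith [norm_nonneg (Matrix.toEuclideanLin M v), norm_nonneg (Matrix.toEuclideanLin N v),
    mul_nonneg hc0.le (norm_nonneg (Matrix.toEuclideanLin N v))]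


/-- Theorem: concentration of the marginal posterior. -/
theorem marginal_posterior_concentration
    (p q : ℕ)
    (A : Set (EuclideanSpace ℝ (Fin q))) (hA : MeasurableSet A)
    (f : EuclideanSpace ℝ (Fin p) → EuclideanSpace ℝ (Fin q) → ℝ)
    (hfm : Measurable (fun z : EuclideanSpace ℝ (Fin p) × EuclideanSpace ℝ (Fin q) =>
      f z.1 z.2))
    (θs : EuclideanSpace ℝ (Fin p))
    (θη : EuclideanSpace ℝ (Fin q) → EuclideanSpace ℝ (Fin p))
    (D : Matrix (Fin p) (Fin p) ℝ)
    (Dη : EuclideanSpace ℝ (Fin q) → Matrix (Fin p) (Fin p) ℝ)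
    (rη : EuclideanSpace ℝ (Fin q) → ℝ) (rs x ν C₀ b : ℝ)
    (hD : D.PosDef) (hDη : ∀ η ∈ A, (Dη η).PosDef)
    (hrη : ∀ η ∈ A, 0 < rη η) (hrs : 0 < rs)
    (hν0 : 0 < ν) (hν1 : ν ≤ 1) (hC₀ : 1 ≤ C₀) (hb : 0 ≤ b)
    -- e^f is integrable over ℝ^p × A
    (hint : IntegrableOn
      (fun z : EuclideanSpace ℝ (Fin p) × EuclideanSpace ℝ (Fin q) => Real.exp (f z.1 z.2))
      ((Set.univ : Set (EuclideanSpace ℝ (Fin p))) ×ˢ A))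
    -- per-slice integrability with positive integral
    (hslice_int : ∀ η ∈ A, Integrable (fun u => Real.exp (f u η)))
    (hslice_pos : ∀ η ∈ A, 0 < ∫ u, Real.exp (f u η))
    -- (i) per-slice tail bound
    (htail : ∀ η ∈ A,
      (∫ u in {u : EuclideanSpace ℝ (Fin p) |
          ‖Matrix.toEuclideanLin (Dη η) (u - θη η)‖ > ν⁻¹ * rη η}, Real.exp (f u η))
        ≤ Real.exp (-x) * ∫ u, Real.exp (f u η))
    -- (ii) Loewner sandwich C₀⁻² D² ⪯ D_η² ⪯ C₀² D²
    (hsand : ∀ η ∈ A, ((Dη η) ^ 2 - C₀⁻¹ ^ 2 • D ^ 2).PosSemidef ∧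
        (C₀ ^ 2 • D ^ 2 - (Dη η) ^ 2).PosSemidef)
    -- (iii) uniform bias bound
    (hbias : ∀ η ∈ A, ‖Matrix.toEuclideanLin D (θη η - θs)‖ ≤ b)
    -- (iv) radii comparison
    (hr : ∀ η ∈ A, rη η ≤ C₀ * rs) :
    (∫ z in {z : EuclideanSpace ℝ (Fin p) × EuclideanSpace ℝ (Fin q) |
        ‖Matrix.toEuclideanLin D (z.1 - θs)‖ > C₀ ^ 2 * ν⁻¹ * rs + b ∧ z.2 ∈ A},
      Real.exp (f z.1 z.2))
      ≤ Real.exp (-x) *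
        ∫ z in (Set.univ : Set (EuclideanSpace ℝ (Fin p))) ×ˢ A, Real.exp (f z.1 z.2) := by
  
  classical
  set g : EuclideanSpace ℝ (Fin p) × EuclideanSpace ℝ (Fin q) → ℝ :=
    fun z => Real.exp (f z.1 z.2) with hg
  set R : ℝ := C₀ ^ 2 * ν⁻¹ * rs + b with hR
  set L := Matrix.toEuclideanLin D with hL
  set S : Set (EuclideanSpace ℝ (Fin p) × EuclideanSpace ℝ (Fin q)) :=
    {z | ‖L (z.1 - θs)‖ > R ∧ z.2 ∈ A} with hS
  set U : Set (EuclideanSpace ℝ (Fin p) × EuclideanSpace ℝ (Fin q)) :=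
    (Set.univ : Set (EuclideanSpace ℝ (Fin p))) ×ˢ A with hU
  -- symmetry of the matrices
  have hDsym : D.transpose = D := by
    rw [← Matrix.conjTranspose_eq_transpose_of_trivial]; exact hD.1
  -- continuity / measurability
  have hLc : Continuous fun u : EuclideanSpace ℝ (Fin p) => ‖L (u - θs)‖ :=
    (L.continuous_of_finiteDimensional.comp (continuous_id.sub continuous_const)).norm
  have hSm : MeasurableSet S := by
    have h1 : MeasurableSet {z : EuclideanSpace ℝ (Fin p) × EuclideanSpace ℝ (Fin q) |
        ‖L (z.1 - θs)‖ > R} :=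
      measurableSet_lt measurable_const (hLc.comp continuous_fst).measurable
    exact h1.inter (measurable_snd hA)
  have hUm : MeasurableSet U := MeasurableSet.univ.prod hA
  have hsub : S ⊆ U := fun z hz => ⟨Set.mem_univ _, hz.2⟩
  -- integrability of indicators on the product
  have hGint : Integrable (U.indicator g) := (integrable_indicator_iff hUm).2 hint
  have hSint : Integrable (S.indicator g) :=
    (integrable_indicator_iff hSm).2 (hint.mono_set hsub)
  have hSint' : Integrable (S.indicator g) (volume.prod volume) := by
    rwa [← Measure.volume_eq_prod _ _]
  have hGint' : Integrable (U.indicator g) (volume.prod volume) := by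
    rwa [← Measure.volume_eq_prod _ _]
  -- Fubini
  have hfub1 : ∫ z, S.indicator g z = ∫ η, ∫ u, S.indicator g (u, η) := by
    rw [Measure.volume_eq_prod _ _]; exact integral_prod_symm _ hSint'
  have hfub2 : ∫ z, U.indicator g z = ∫ η, ∫ u, U.indicator g (u, η) := by
    rw [Measure.volume_eq_prod _ _]; exact integral_prod_symm _ hGint'
  -- pointwise (in η) comparison of the inner integrals
  have hpt : ∀ η, (∫ u, S.indicator g (u, η))
      ≤ Real.exp (-x) * ∫ u, U.indicator g (u, η) := by
    intro η
    by_cases hη : η ∈ A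
    · -- identify the inner integrals
      have hSslice : (fun u => S.indicator g (u, η))
          = Set.indicator {u | ‖L (u - θs)‖ > R} (fun u => Real.exp (f u η)) := by
        funext u
        by_cases hu : ‖L (u - θs)‖ > R <;>
          simp [Set.indicator_apply, hS, hu, hη, hg, Set.mem_setOf_eq]
      have hUslice : (fun u => U.indicator g (u, η)) = fun u => Real.exp (f u η) := by
        funext u; simp [Set.indicator_apply, hU, hη, hg]
      rw [hSslice, hUslice]
      have hSηm : MeasurableSet {u : EuclideanSpace ℝ (Fin p) | ‖L (u - θs)‖ > R} :=
        measurableSet_lt measurable_const hLc.measurable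
      rw [integral_indicator hSηm]
      -- the key set inclusion
      have hincl : {u : EuclideanSpace ℝ (Fin p) | ‖L (u - θs)‖ > R}
          ⊆ {u : EuclideanSpace ℝ (Fin p) |
              ‖Matrix.toEuclideanLin (Dη η) (u - θη η)‖ > ν⁻¹ * rη η} := by
        intro u hu
        simp only [Set.mem_setOf_eq] at hu ⊢
        by_contra hle
        push_neg at hle
        have hDηsym : (Dη η).transpose = Dη η := by
          rw [← Matrix.conjTranspose_eq_transpose_of_trivial]; exact (hDη η hη).1
        have h1 : ‖L (u - θη η)‖ ≤ C₀ * ‖Matrix.toEuclideanLin (Dη η) (u - θη η)‖ :=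
          norm_toEuclideanLin_le D (Dη η) hDsym hDηsym C₀ hC₀ (hsand η hη).1 _
        have h2 : ‖L (u - θs)‖ ≤ ‖L (u - θη η)‖ + ‖L (θη η - θs)‖ := by
          have heq : (u - θs : EuclideanSpace ℝ (Fin p)) = (u - θη η) + (θη η - θs) := by
            abel
          rw [heq, map_add]; exact norm_add_le _ _
        have h3 : C₀ * ‖Matrix.toEuclideanLin (Dη η) (u - θη η)‖ ≤ C₀ * (ν⁻¹ * rη η) :=
          mul_le_mul_of_nonneg_left hle (by linarith)
        have h4 : ν⁻¹ * rη η ≤ ν⁻¹ * (C₀ * rs) :=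
          mul_le_mul_of_nonneg_left (hr η hη) (inv_nonneg.2 hν0.le)
        have h5 : C₀ * (ν⁻¹ * rη η) ≤ C₀ * (ν⁻¹ * (C₀ * rs)) :=
          mul_le_mul_of_nonneg_left h4 (by linarith)
        have h6 : C₀ * (ν⁻¹ * (C₀ * rs)) = C₀ ^ 2 * ν⁻¹ * rs := by ring
        have h7 := hbias η hη
        rw [hR] at hu
        linarith
      calc (∫ u in {u : EuclideanSpace ℝ (Fin p) | ‖L (u - θs)‖ > R}, Real.exp (f u η))
          ≤ ∫ u in {u : EuclideanSpace ℝ (Fin p) |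
              ‖Matrix.toEuclideanLin (Dη η) (u - θη η)‖ > ν⁻¹ * rη η}, Real.exp (f u η) :=
            setIntegral_mono_set ((hslice_int η hη).integrableOn)
              (Filter.Eventually.of_forall fun u => (Real.exp_pos _).le)
              (HasSubset.Subset.eventuallyLE hincl)
        _ ≤ Real.exp (-x) * ∫ u, Real.exp (f u η) := htail η hη
    · have hS0 : (fun u => S.indicator g (u, η)) = fun _ => (0 : ℝ) := by
        funext u
        have : (u, η) ∉ S := fun hmem => hη hmem.2
        simp [Set.indicator_apply, this]
      have hU0 : (fun u => U.indicator g (u, η)) = fun _ => (0 : ℝ) := by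
        funext u
        have : (u, η) ∉ U := fun hmem => hη hmem.2
        simp [Set.indicator_apply, this]
      rw [hS0, hU0]
      simp
  -- integrability of the two η-functions
  have h1int : Integrable (fun η => ∫ u, S.indicator g (u, η)) :=
    hSint'.integral_prod_right
  have h2int : Integrable (fun η => Real.exp (-x) * ∫ u, U.indicator g (u, η)) :=
    (hGint'.integral_prod_right).const_mul _
  -- put everything together
  calc (∫ z in S, g z) = ∫ z, S.indicator g z := (integral_indicator hSm).symm
    _ = ∫ η, ∫ u, S.indicator g (u, η) := hfub1
    _ ≤ ∫ η, Real.exp (-x) * ∫ u, U.indicator g (u, η) := integral_mono h1int h2int hpt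
    _ = Real.exp (-x) * ∫ η, ∫ u, U.indicator g (u, η) := integral_const_mul _ _
    _ = Real.exp (-x) * ∫ z, U.indicator g z := by rw [hfub2]
    _ = Real.exp (-x) * ∫ z in U, g z := by rw [integral_indicator hUm]
end

section
/- (Single-Gaussian Laplace approximation of the marginal.) Under the setup and hypotheses (i)–(ii) of the mixed Laplace approximation theorem — A ⊆ ℝ^q measurable, f : ℝ^p × A → ℝ with e^f integrable; θ_η ∈ ℝ^p, F_η symmetric positive definite, ◊_η ≥ 0 for η ∈ A; F = F_{η*}, φ_η = f(θ_η, η) − f(θ*, η*), δ_η = (1/2) log det(F_η^{-1} F); per-η Laplace bounds with error ◊_η + e^{-x}; integrability and positivity of the weights e^{φ_η + δ_η} — fix a measurable g : ℝ^p → ℝ with |g| ≤ 1, define Δ_{g,η} = E[g(θ_η + F_η^{-1/2} γ)] − E[g(θ* + F^{-1/2} γ)] (Gaussian expectations defined as normalized Gaussian integrals), Δ_g = | (∫_A Δ_{g,η} e^{φ_η + δ_η} dη) / (∫_A e^{φ_η + δ_η} dη) |, and err_A = (∫_A ◊_η e^{φ_η + δ_η} dη) / (∫_A e^{φ_η + δ_η}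 dη). If err_A + Δ_g < 1/2 − e^{-x}, then | (∫_{ℝ^p × A} e^{f(θ,η)} g(θ) dθ dη) / (∫_{ℝ^p × A} e^{f(θ,η)} dθ dη) − E[g(θ* + F^{-1/2} γ)] | ≤ 2 (err_A + Δ_g + e^{-x}) / (1 − err_A − Δ_g − e^{-x}). -/
open MeasureTheory

/-- The positive semidefinite square root of a matrix (equal to `0` off the
positive semidefinite matrices). -/
noncomputable def matSqrt {n : ℕ} (M : Matrix (Fin n) (Fin n) ℝ) : Matrix (Fin n) (Fin n) ℝ :=
  open scoped Classical in
  if h : M.PosSemidef then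
    (h.isHermitian.eigenvectorUnitary : Matrix (Fin n) (Fin n) ℝ) *
      Matrix.diagonal ((↑) ∘ (√·) ∘ h.isHermitian.eigenvalues) *
      (star h.isHermitian.eigenvectorUnitary : Matrix (Fin n) (Fin n) ℝ)
  else 0

namespace SGLaux

variable {n : ℕ}

lemma matSqrt_mul_self {M : Matrix (Fin n) (Fin n) ℝ} (hM : M.PosSemidef) :
    matSqrt M * matSqrt M = M := by
  rw [matSqrt, dif_pos hM]
  have hU : (star hM.isHermitian.eigenvectorUnitary : Matrix (Fin n) (Fin n) ℝ) *
      (hM.isHermitian.eigenvectorUnitary : Matrix (Fin n) (Fin n) ℝ) = 1 :=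
    Unitary.coe_star_mul_self _
  conv_rhs => rw [hM.isHermitian.spectral_theorem, Unitary.conjStarAlgAut_apply]
  simp only [Matrix.mul_assoc]
  rw [← Matrix.mul_assoc (star _ : Matrix (Fin n) (Fin n) ℝ) _, hU, Matrix.one_mul,
    ← Matrix.mul_assoc (Matrix.diagonal _), Matrix.diagonal_mul_diagonal]
  congr 3
  funext i
  simp [Real.mul_self_sqrt (hM.eigenvalues_nonneg i)]

lemma abs_det_matSqrt {M : Matrix (Fin n) (Fin n) ℝ} (hM : M.PosDef) :
    |(matSqrt M).det| = Real.sqrt M.det := by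
  have h2 : (matSqrt M).det * (matSqrt M).det = M.det := by
    rw [← Matrix.det_mul, matSqrt_mul_self hM.posSemidef]
  rw [← Real.sqrt_sq_eq_abs, sq, h2]

lemma det_matSqrt_ne_zero {M : Matrix (Fin n) (Fin n) ℝ} (hM : M.PosDef) :
    (matSqrt M).det ≠ 0 := by
  intro h
  have h1 := abs_det_matSqrt hM
  rw [h, abs_zero] at h1
  have h2 := hM.det_pos
  nlinarith [Real.sq_sqrt h2.le, Real.sqrt_nonneg M.det]

lemma det_toEuclideanLin (M : Matrix (Fin n) (Fin n) ℝ) :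
    LinearMap.det (Matrix.toEuclideanLin M) = M.det := by
  rw [Matrix.toEuclideanLin_eq_toLin]
  exact LinearMap.det_toLin _ M

lemma continuous_toEuclideanLin (M : Matrix (Fin n) (Fin n) ℝ) :
    Continuous (Matrix.toEuclideanLin M) :=
  (Matrix.toEuclideanLin M).continuous_of_finiteDimensional

lemma map_matSqrt {M : Matrix (Fin n) (Fin n) ℝ} (hM : M.PosDef) :
    Measure.map (Matrix.toEuclideanLin (matSqrt M)) (volume : Measure (EuclideanSpace ℝ (Fin n)))
      = ENNReal.ofReal (Real.sqrt M.det)⁻¹ • volume := by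
  have hdet : LinearMap.det (Matrix.toEuclideanLin (matSqrt M)) ≠ 0 := by
    rw [det_toEuclideanLin]; exact det_matSqrt_ne_zero hM
  rw [Measure.map_linearMap_addHaar_eq_smul_addHaar _ hdet, det_toEuclideanLin, abs_inv,
    abs_det_matSqrt hM]

lemma integral_comp_matSqrt {M : Matrix (Fin n) (Fin n) ℝ} (hM : M.PosDef)
    (h : EuclideanSpace ℝ (Fin n) → ℝ) (hh : Measurable h) :
    ∫ u, h (Matrix.toEuclideanLin (matSqrt M) u) = (Real.sqrt M.det)⁻¹ * ∫ u, h u := by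
  have h0 := integral_map (μ := (volume : Measure (EuclideanSpace ℝ (Fin n))))
    ((continuous_toEuclideanLin (matSqrt M)).measurable.aemeasurable)
    (f := h) (hh.aestronglyMeasurable)
  rw [map_matSqrt hM] at h0
  rw [← h0, integral_smul_measure, ENNReal.toReal_ofReal (by positivity), smul_eq_mul]

lemma integrable_std_gauss :
    Integrable (fun u : EuclideanSpace ℝ (Fin n) => Real.exp (-‖u‖ ^ 2 / 2)) := by
  have h := (GaussianFourier.integrable_cexp_neg_mul_sq_norm_add
    (V := EuclideanSpace ℝ (Fin n)) (b := (1/2 : ℂ)) (by norm_num) 0 0).norm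
  convert h using 2 with u
  simp [Complex.norm_exp]
  ring_nf
  norm_cast

lemma integral_std_gauss_pos :
    0 < ∫ u : EuclideanSpace ℝ (Fin n), Real.exp (-‖u‖ ^ 2 / 2) := by
  have h := GaussianFourier.integral_rexp_neg_mul_sq_norm
    (V := EuclideanSpace ℝ (Fin n)) (b := (1/2 : ℝ)) (by norm_num)
  have he : (fun u : EuclideanSpace ℝ (Fin n) => Real.exp (-‖u‖ ^ 2 / 2))
      = fun u => Real.exp (-(1/2) * ‖u‖ ^ 2) := by
    funext u; ring_nf
  rw [he, h]
  positivity

lemma measurable_gauss (M : Matrix (Fin n) (Fin n) ℝ) :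
    Measurable (fun u : EuclideanSpace ℝ (Fin n) =>
      Real.exp (-‖Matrix.toEuclideanLin (matSqrt M) u‖ ^ 2 / 2)) := by
  refine (Real.continuous_exp.comp ?_).measurable
  exact (((continuous_toEuclideanLin (matSqrt M)).norm.pow 2).neg).div_const 2

lemma integrable_gauss {M : Matrix (Fin n) (Fin n) ℝ} (hM : M.PosDef) :
    Integrable (fun u : EuclideanSpace ℝ (Fin n) =>
      Real.exp (-‖Matrix.toEuclideanLin (matSqrt M) u‖ ^ 2 / 2)) := by
  have h1 : Integrable (fun u : EuclideanSpace ℝ (Fin n) => Real.exp (-‖u‖ ^ 2 / 2))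
      (Measure.map (Matrix.toEuclideanLin (matSqrt M)) volume) := by
    rw [map_matSqrt hM]
    exact integrable_std_gauss.smul_measure ENNReal.ofReal_ne_top
  exact (integrable_map_measure
    ((Continuous.measurable (by continuity : Continuous fun u : EuclideanSpace ℝ (Fin n) =>
      Real.exp (-‖u‖ ^ 2 / 2))).aestronglyMeasurable)
    ((continuous_toEuclideanLin (matSqrt M)).measurable.aemeasurable)).mp h1

lemma integral_gauss {M : Matrix (Fin n) (Fin n) ℝ} (hM : M.PosDef) :
    ∫ u : EuclideanSpace ℝ (Fin n), Real.exp (-‖Matrix.toEuclideanLin (matSqrt M) u‖ ^ 2 / 2)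
      = (Real.sqrt M.det)⁻¹ * ∫ u : EuclideanSpace ℝ (Fin n), Real.exp (-‖u‖ ^ 2 / 2) :=
  integral_comp_matSqrt hM (fun v => Real.exp (-‖v‖ ^ 2 / 2))
    (Continuous.measurable (by continuity))

lemma integral_gauss_pos {M : Matrix (Fin n) (Fin n) ℝ} (hM : M.PosDef) :
    0 < ∫ u : EuclideanSpace ℝ (Fin n),
      Real.exp (-‖Matrix.toEuclideanLin (matSqrt M) u‖ ^ 2 / 2) := by
  rw [integral_gauss hM]
  have h0 := integral_std_gauss_pos (n := n)
  have hd : 0 < Real.sqrt M.det := Real.sqrt_pos.2 hM.det_pos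
  positivity

lemma abs_integral_le_gauss {M : Matrix (Fin n) (Fin n) ℝ} (hM : M.PosDef)
    (h : EuclideanSpace ℝ (Fin n) → ℝ) (hb : ∀ u, |h u| ≤ 1) :
    |∫ u : EuclideanSpace ℝ (Fin n),
        h u * Real.exp (-‖Matrix.toEuclideanLin (matSqrt M) u‖ ^ 2 / 2)|
      ≤ ∫ u : EuclideanSpace ℝ (Fin n),
          Real.exp (-‖Matrix.toEuclideanLin (matSqrt M) u‖ ^ 2 / 2) := by
  rw [← Real.norm_eq_abs]
  refine norm_integral_le_of_norm_le (integrable_gauss hM) (ae_of_all _ fun u => ?_)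
  rw [Real.norm_eq_abs, abs_mul, Real.abs_exp]
  calc |h u| * Real.exp (-‖Matrix.toEuclideanLin (matSqrt M) u‖ ^ 2 / 2)
      ≤ 1 * Real.exp (-‖Matrix.toEuclideanLin (matSqrt M) u‖ ^ 2 / 2) :=
        mul_le_mul_of_nonneg_right (hb u) (Real.exp_pos _).le
    _ = _ := one_mul _

lemma gauss_ratio {M K : Matrix (Fin n) (Fin n) ℝ} (hM : M.PosDef) (hK : K.PosDef) :
    (∫ u : EuclideanSpace ℝ (Fin n),
        Real.exp (-‖Matrix.toEuclideanLin (matSqrt M) u‖ ^ 2 / 2))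
      = Real.exp ((1/2) * Real.log ((M⁻¹ * K).det)) *
        ∫ u : EuclideanSpace ℝ (Fin n),
          Real.exp (-‖Matrix.toEuclideanLin (matSqrt K) u‖ ^ 2 / 2) := by
  have hdM := hM.det_pos
  have hdK := hK.det_pos
  have ht : (M⁻¹ * K).det = K.det / M.det := by
    rw [Matrix.det_mul, Matrix.det_nonsing_inv, Ring.inverse_eq_inv', inv_mul_eq_div]
  have hexp : Real.exp ((1/2) * Real.log ((M⁻¹ * K).det))
      = Real.sqrt K.det / Real.sqrt M.det := by
    rw [ht, mul_comm, ← Real.rpow_def_of_pos (by positivity), ← Real.sqrt_eq_rpow,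
      Real.sqrt_div hdK.le]
  rw [integral_gauss hM, integral_gauss hK, hexp]
  have s1 : 0 < Real.sqrt M.det := Real.sqrt_pos.2 hdM
  have s2 : 0 < Real.sqrt K.det := Real.sqrt_pos.2 hdK
  field_simp

end SGLaux

/-- Single-Gaussian Laplace approximation of the marginal. -/
theorem single_gaussian_laplace_approximation
    (p q : ℕ)
    (A : Set (EuclideanSpace ℝ (Fin q))) (hA : MeasurableSet A)
    (f : EuclideanSpace ℝ (Fin p) → EuclideanSpace ℝ (Fin q) → ℝ)
    (hfm : Measurable (fun z : EuclideanSpace ℝ (Fin p) × EuclideanSpace ℝ (Fin q) =>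
      f z.1 z.2))
    (θη : EuclideanSpace ℝ (Fin q) → EuclideanSpace ℝ (Fin p))
    (Fη : EuclideanSpace ℝ (Fin q) → Matrix (Fin p) (Fin p) ℝ)
    (dia : EuclideanSpace ℝ (Fin q) → ℝ)
    (θs : EuclideanSpace ℝ (Fin p)) (ηs : EuclideanSpace ℝ (Fin q)) (hηs : ηs ∈ A)
    (x : ℝ)
    (hFη : ∀ η ∈ A, (Fη η).PosDef)
    (hdia : ∀ η ∈ A, 0 ≤ dia η)
    (hintf : IntegrableOn
      (fun z : EuclideanSpace ℝ (Fin p) × EuclideanSpace ℝ (Fin q) => Real.exp (f z.1 z.2))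
      ((Set.univ : Set (EuclideanSpace ℝ (Fin p))) ×ˢ A))
    (φ δ : EuclideanSpace ℝ (Fin q) → ℝ)
    (hφ : ∀ η, φ η = f (θη η) η - f θs ηs)
    (hδ : ∀ η, δ η = (1 / 2) * Real.log ((Fη η)⁻¹ * Fη ηs).det)
    -- per-η Laplace approximation bound with error ◊_η + e^{-x}
    (hlap : ∀ η ∈ A, ∀ h : EuclideanSpace ℝ (Fin p) → ℝ, Measurable h → (∀ u, |h u| ≤ 1) →
      |(∫ u, Real.exp (f (θη η + u) η - f (θη η) η) * h (θη η + u)) -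
          ∫ u, Real.exp (-‖Matrix.toEuclideanLin (matSqrt (Fη η)) u‖ ^ 2 / 2) * h (θη η + u)|
        ≤ (dia η + Real.exp (-x)) *
            ∫ u, Real.exp (-‖Matrix.toEuclideanLin (matSqrt (Fη η)) u‖ ^ 2 / 2))
    (hw1 : IntegrableOn (fun η => dia η * Real.exp (φ η + δ η)) A)
    (hw2 : IntegrableOn (fun η => Real.exp (φ η + δ η)) A)
    (hwpos : 0 < ∫ η in A, Real.exp (φ η + δ η))
    (errA : ℝ)
    (herrA : errA =
      (∫ η in A, dia η * Real.exp (φ η + δ η)) / ∫ η in A, Real.exp (φ η + δ η))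
    -- the fixed test function g, |g| ≤ 1
    (g : EuclideanSpace ℝ (Fin p) → ℝ) (hg : Measurable g) (hgb : ∀ θ, |g θ| ≤ 1)
    -- Δ_{g,η} : difference of the Gaussian expectations of g under N(θ_η, F_η⁻¹)
    -- and N(θ*, F⁻¹) (Gaussian expectations as normalized Gaussian integrals)
    (Δgη : EuclideanSpace ℝ (Fin q) → ℝ)
    (hΔgη : ∀ η, Δgη η =
      (∫ u, g (θη η + u) * Real.exp (-‖Matrix.toEuclideanLin (matSqrt (Fη η)) u‖ ^ 2 / 2)) /
        (∫ u, Real.exp (-‖Matrix.toEuclideanLin (matSqrt (Fη η)) u‖ ^ 2 / 2)) -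
      (∫ u, g (θs + u) * Real.exp (-‖Matrix.toEuclideanLin (matSqrt (Fη ηs)) u‖ ^ 2 / 2)) /
        (∫ u, Real.exp (-‖Matrix.toEuclideanLin (matSqrt (Fη ηs)) u‖ ^ 2 / 2)))
    (hΔint : IntegrableOn (fun η => Δgη η * Real.exp (φ η + δ η)) A)
    (Δg : ℝ)
    (hΔg : Δg = |(∫ η in A, Δgη η * Real.exp (φ η + δ η)) /
      ∫ η in A, Real.exp (φ η + δ η)|)
    (hsmall : errA + Δg < 1 / 2 - Real.exp (-x)) :
    |(∫ z in (Set.univ : Set (EuclideanSpace ℝ (Fin p))) ×ˢ A,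
          Real.exp (f z.1 z.2) * g z.1) /
        (∫ z in (Set.univ : Set (EuclideanSpace ℝ (Fin p))) ×ˢ A, Real.exp (f z.1 z.2)) -
      (∫ u, g (θs + u) * Real.exp (-‖Matrix.toEuclideanLin (matSqrt (Fη ηs)) u‖ ^ 2 / 2)) /
        (∫ u, Real.exp (-‖Matrix.toEuclideanLin (matSqrt (Fη ηs)) u‖ ^ 2 / 2))|
      ≤ 2 * (errA + Δg + Real.exp (-x)) / (1 - errA - Δg - Real.exp (-x)) := by
  classical
  have hF : (Fη ηs).PosDef := hFη ηs hηs
  set Ns := ∫ u : EuclideanSpace ℝ (Fin p),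
      Real.exp (-‖Matrix.toEuclideanLin (matSqrt (Fη ηs)) u‖ ^ 2 / 2) with hNsdef
  set Gs := ∫ u : EuclideanSpace ℝ (Fin p),
      g (θs + u) * Real.exp (-‖Matrix.toEuclideanLin (matSqrt (Fη ηs)) u‖ ^ 2 / 2) with hGsdef
  have hNs_pos : 0 < Ns := SGLaux.integral_gauss_pos hF
  have hEs : |Gs / Ns| ≤ 1 := by
    rw [abs_div, abs_of_pos hNs_pos, div_le_one hNs_pos]
    exact SGLaux.abs_integral_le_gauss hF (fun u => g (θs + u)) (fun u => hgb _)
  set c := Real.exp (f θs ηs) * Ns with hcdef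
  have hc : 0 < c := mul_pos (Real.exp_pos _) hNs_pos
  -- the weight identity
  have hcN : ∀ η ∈ A, Real.exp (f (θη η) η) *
      (∫ u : EuclideanSpace ℝ (Fin p),
        Real.exp (-‖Matrix.toEuclideanLin (matSqrt (Fη η)) u‖ ^ 2 / 2))
      = c * Real.exp (φ η + δ η) := by
    intro η hη
    rw [SGLaux.gauss_ratio (hFη η hη) hF, ← hδ η, hφ η, hcdef, ← hNsdef,
      Real.exp_add, Real.exp_sub]
    field_simp
  -- per-η Laplace step for a general bounded test function
  have hstep : ∀ η ∈ A, ∀ h : EuclideanSpace ℝ (Fin p) → ℝ, Measurable h → (∀ u, |h u| ≤ 1) →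
      |(∫ θ : EuclideanSpace ℝ (Fin p), Real.exp (f θ η) * h θ)
          - Real.exp (f (θη η) η) *
            ∫ u, Real.exp (-‖Matrix.toEuclideanLin (matSqrt (Fη η)) u‖ ^ 2 / 2) * h (θη η + u)|
        ≤ Real.exp (f (θη η) η) * ((dia η + Real.exp (-x)) *
            ∫ u, Real.exp (-‖Matrix.toEuclideanLin (matSqrt (Fη η)) u‖ ^ 2 / 2)) := by
    intro η hη h hm hb
    have htrans : (∫ θ : EuclideanSpace ℝ (Fin p), Real.exp (f θ η) * h θ)
        = Real.exp (f (θη η) η) *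
          ∫ u, Real.exp (f (θη η + u) η - f (θη η) η) * h (θη η + u) := by
      rw [← integral_add_left_eq_self (fun θ => Real.exp (f θ η) * h θ) (θη η),
        ← integral_const_mul]
      congr 1
      funext u
      have he : Real.exp (f (θη η) η) * Real.exp (f (θη η + u) η - f (θη η) η)
          = Real.exp (f (θη η + u) η) := by
        rw [← Real.exp_add]; congr 1; ring
      rw [← mul_assoc, he]
    rw [htrans, ← mul_sub, abs_mul, Real.abs_exp]
    exact mul_le_mul_of_nonneg_left (hlap η hη h hm hb) (Real.exp_pos _).le
  -- key bound with test function g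
  have keyg : ∀ η ∈ A,
      |(∫ θ : EuclideanSpace ℝ (Fin p), Real.exp (f θ η) * g θ)
          - c * ((Gs / Ns + Δgη η) * Real.exp (φ η + δ η))|
        ≤ c * ((dia η + Real.exp (-x)) * Real.exp (φ η + δ η)) := by
    intro η hη
    set Nη := ∫ u : EuclideanSpace ℝ (Fin p),
        Real.exp (-‖Matrix.toEuclideanLin (matSqrt (Fη η)) u‖ ^ 2 / 2) with hNηdef
    have hNη_pos : 0 < Nη := SGLaux.integral_gauss_pos (hFη η hη)
    have hGg : (∫ u : EuclideanSpace ℝ (Fin p),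
        Real.exp (-‖Matrix.toEuclideanLin (matSqrt (Fη η)) u‖ ^ 2 / 2) * g (θη η + u))
        = (Gs / Ns + Δgη η) * Nη := by
      have hcomm : (∫ u : EuclideanSpace ℝ (Fin p),
          Real.exp (-‖Matrix.toEuclideanLin (matSqrt (Fη η)) u‖ ^ 2 / 2) * g (θη η + u))
          = ∫ u : EuclideanSpace ℝ (Fin p),
            g (θη η + u) * Real.exp (-‖Matrix.toEuclideanLin (matSqrt (Fη η)) u‖ ^ 2 / 2) := by
        congr 1; funext u; ring
      rw [hcomm, hΔgη η, ← hNηdef]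
      field_simp
      ring
    have h2 := hstep η hη g hg hgb
    rw [← hNηdef, hGg] at h2
    have h3 := hcN η hη
    rw [← hNηdef] at h3
    have e1 : c * ((Gs / Ns + Δgη η) * Real.exp (φ η + δ η))
        = Real.exp (f (θη η) η) * ((Gs / Ns + Δgη η) * Nη) := by
      linear_combination (-(Gs / Ns + Δgη η)) * h3
    have e2 : c * ((dia η + Real.exp (-x)) * Real.exp (φ η + δ η))
        = Real.exp (f (θη η) η) * ((dia η + Real.exp (-x)) * Nη) := by
      linear_combination (-(dia η + Real.exp (-x))) * h3
    rw [e1, e2]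
    exact h2
  -- key bound with the constant function 1
  have key1 : ∀ η ∈ A,
      |(∫ θ : EuclideanSpace ℝ (Fin p), Real.exp (f θ η)) - c * Real.exp (φ η + δ η)|
        ≤ c * ((dia η + Real.exp (-x)) * Real.exp (φ η + δ η)) := by
    intro η hη
    set Nη := ∫ u : EuclideanSpace ℝ (Fin p),
        Real.exp (-‖Matrix.toEuclideanLin (matSqrt (Fη η)) u‖ ^ 2 / 2) with hNηdef
    have h2 := hstep η hη (fun _ => 1) measurable_const (fun u => by norm_num)
    simp only [mul_one] at h2
    rw [← hNηdef] at h2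
    have h3 := hcN η hη
    rw [← hNηdef] at h3
    have e2 : c * ((dia η + Real.exp (-x)) * Real.exp (φ η + δ η))
        = Real.exp (f (θη η) η) * ((dia η + Real.exp (-x)) * Nη) := by
      linear_combination (-(dia η + Real.exp (-x))) * h3
    rw [h3] at h2
    rw [e2]
    exact h2
  -- Fubini
  have hprodmeas : (volume :
        Measure (EuclideanSpace ℝ (Fin p) × EuclideanSpace ℝ (Fin q))).restrict
          ((Set.univ : Set (EuclideanSpace ℝ (Fin p))) ×ˢ A)
      = Measure.prod (volume : Measure (EuclideanSpace ℝ (Fin p))) (volume.restrict A) := by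
    rw [Measure.volume_eq_prod, ← Measure.prod_restrict, Measure.restrict_univ]
  have hintg : IntegrableOn
      (fun z : EuclideanSpace ℝ (Fin p) × EuclideanSpace ℝ (Fin q) =>
        Real.exp (f z.1 z.2) * g z.1)
      ((Set.univ : Set (EuclideanSpace ℝ (Fin p))) ×ˢ A) := by
    refine hintf.mono'
      (((Real.measurable_exp.comp hfm).mul (hg.comp measurable_fst)).aestronglyMeasurable)
      (ae_of_all _ fun z => ?_)
    rw [Real.norm_eq_abs, abs_mul, Real.abs_exp]
    nlinarith [hgb z.1, Real.exp_pos (f z.1 z.2), abs_nonneg (g z.1)]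
  have hfg_prod : Integrable
      (fun z : EuclideanSpace ℝ (Fin p) × EuclideanSpace ℝ (Fin q) =>
        Real.exp (f z.1 z.2) * g z.1)
      (Measure.prod (volume : Measure (EuclideanSpace ℝ (Fin p))) (volume.restrict A)) := by
    rw [← hprodmeas]; exact hintg
  have hf_prod : Integrable
      (fun z : EuclideanSpace ℝ (Fin p) × EuclideanSpace ℝ (Fin q) => Real.exp (f z.1 z.2))
      (Measure.prod (volume : Measure (EuclideanSpace ℝ (Fin p))) (volume.restrict A)) := by
    rw [← hprodmeas]; exact hintf
  have hZgEq : (∫ z in (Set.univ : Set (EuclideanSpace ℝ (Fin p))) ×ˢ A,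
        Real.exp (f z.1 z.2) * g z.1)
      = ∫ η in A, ∫ θ : EuclideanSpace ℝ (Fin p), Real.exp (f θ η) * g θ := by
    rw [show (∫ z in (Set.univ : Set (EuclideanSpace ℝ (Fin p))) ×ˢ A,
        Real.exp (f z.1 z.2) * g z.1)
      = ∫ z, Real.exp (f z.1 z.2) * g z.1
          ∂((volume : Measure (EuclideanSpace ℝ (Fin p) × EuclideanSpace ℝ (Fin q))).restrict
            ((Set.univ : Set (EuclideanSpace ℝ (Fin p))) ×ˢ A)) from rfl, hprodmeas]
    exact integral_prod_symm _ hfg_prod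
  have hZEq : (∫ z in (Set.univ : Set (EuclideanSpace ℝ (Fin p))) ×ˢ A,
        Real.exp (f z.1 z.2))
      = ∫ η in A, ∫ θ : EuclideanSpace ℝ (Fin p), Real.exp (f θ η) := by
    rw [show (∫ z in (Set.univ : Set (EuclideanSpace ℝ (Fin p))) ×ˢ A,
        Real.exp (f z.1 z.2))
      = ∫ z, Real.exp (f z.1 z.2)
          ∂((volume : Measure (EuclideanSpace ℝ (Fin p) × EuclideanSpace ℝ (Fin q))).restrict
            ((Set.univ : Set (EuclideanSpace ℝ (Fin p))) ×ˢ A)) from rfl, hprodmeas]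
    exact integral_prod_symm _ hf_prod
  have hIg_int : IntegrableOn
      (fun η => ∫ θ : EuclideanSpace ℝ (Fin p), Real.exp (f θ η) * g θ) A :=
    hfg_prod.integral_prod_right
  have hI1_int : IntegrableOn
      (fun η => ∫ θ : EuclideanSpace ℝ (Fin p), Real.exp (f θ η)) A :=
    hf_prod.integral_prod_right
  -- global estimates
  set W := ∫ η in A, Real.exp (φ η + δ η) with hWdef
  set D := ∫ η in A, Δgη η * Real.exp (φ η + δ η) with hDdef
  have hεfun : (fun η : EuclideanSpace ℝ (Fin q) =>
        (dia η + Real.exp (-x)) * Real.exp (φ η + δ η))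
      = fun η => dia η * Real.exp (φ η + δ η) + Real.exp (-x) * Real.exp (φ η + δ η) := by
    funext η; ring
  have hεint : IntegrableOn
      (fun η => (dia η + Real.exp (-x)) * Real.exp (φ η + δ η)) A := by
    rw [hεfun]; exact hw1.add (hw2.const_mul _)
  have hεval : ∫ η in A, (dia η + Real.exp (-x)) * Real.exp (φ η + δ η)
      = (errA + Real.exp (-x)) * W := by
    rw [hεfun, integral_add hw1 (hw2.const_mul _), integral_const_mul]
    have hEW : errA * W = ∫ η in A, dia η * Real.exp (φ η + δ η) := by
      rw [herrA]; field_simp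
    rw [← hWdef]
    linarith [hEW]
  have hIg2_int : IntegrableOn
      (fun η => c * ((Gs / Ns + Δgη η) * Real.exp (φ η + δ η))) A := by
    have h0 : (fun η : EuclideanSpace ℝ (Fin q) =>
          c * ((Gs / Ns + Δgη η) * Real.exp (φ η + δ η)))
        = fun η => (c * (Gs / Ns)) * Real.exp (φ η + δ η)
            + c * (Δgη η * Real.exp (φ η + δ η)) := by
      funext η; ring
    rw [h0]; exact (hw2.const_mul _).add (hΔint.const_mul _)
  have hcval : ∫ η in A, c * ((Gs / Ns + Δgη η) * Real.exp (φ η + δ η))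
      = c * ((Gs / Ns) * W + D) := by
    have h0 : (fun η : EuclideanSpace ℝ (Fin q) =>
          c * ((Gs / Ns + Δgη η) * Real.exp (φ η + δ η)))
        = fun η => (c * (Gs / Ns)) * Real.exp (φ η + δ η)
            + c * (Δgη η * Real.exp (φ η + δ η)) := by
      funext η; ring
    rw [h0, integral_add (hw2.const_mul _) (hΔint.const_mul _), integral_const_mul,
      integral_const_mul, ← hWdef, ← hDdef]
    ring
  have hZg_est : |(∫ η in A, ∫ θ : EuclideanSpace ℝ (Fin p), Real.exp (f θ η) * g θ)
        - c * ((Gs / Ns) * W + D)| ≤ c * ((errA + Real.exp (-x)) * W) := by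
    rw [← hcval, ← integral_sub hIg_int hIg2_int, ← Real.norm_eq_abs]
    have hbd : ∀ᵐ η ∂(volume.restrict A),
        ‖(∫ θ : EuclideanSpace ℝ (Fin p), Real.exp (f θ η) * g θ)
          - c * ((Gs / Ns + Δgη η) * Real.exp (φ η + δ η))‖
          ≤ c * ((dia η + Real.exp (-x)) * Real.exp (φ η + δ η)) := by
      refine (ae_restrict_iff' hA).2 (ae_of_all _ fun η hη => ?_)
      rw [Real.norm_eq_abs]; exact keyg η hη
    calc ‖∫ η in A, ((∫ θ : EuclideanSpace ℝ (Fin p), Real.exp (f θ η) * g θ)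
            - c * ((Gs / Ns + Δgη η) * Real.exp (φ η + δ η)))‖
        ≤ ∫ η in A, c * ((dia η + Real.exp (-x)) * Real.exp (φ η + δ η)) :=
          norm_integral_le_of_norm_le (hεint.const_mul c) hbd
      _ = c * ((errA + Real.exp (-x)) * W) := by rw [integral_const_mul, hεval]
  have hZ_est : |(∫ η in A, ∫ θ : EuclideanSpace ℝ (Fin p), Real.exp (f θ η)) - c * W|
      ≤ c * ((errA + Real.exp (-x)) * W) := by
    have hcW : c * W = ∫ η in A, c * Real.exp (φ η + δ η) := by
      rw [integral_const_mul, ← hWdef]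
    rw [hcW, ← integral_sub hI1_int (hw2.const_mul c), ← Real.norm_eq_abs]
    have hbd : ∀ᵐ η ∂(volume.restrict A),
        ‖(∫ θ : EuclideanSpace ℝ (Fin p), Real.exp (f θ η)) - c * Real.exp (φ η + δ η)‖
          ≤ c * ((dia η + Real.exp (-x)) * Real.exp (φ η + δ η)) := by
      refine (ae_restrict_iff' hA).2 (ae_of_all _ fun η hη => ?_)
      rw [Real.norm_eq_abs]; exact key1 η hη
    calc ‖∫ η in A, ((∫ θ : EuclideanSpace ℝ (Fin p), Real.exp (f θ η))
            - c * Real.exp (φ η + δ η))‖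
        ≤ ∫ η in A, c * ((dia η + Real.exp (-x)) * Real.exp (φ η + δ η)) :=
          norm_integral_le_of_norm_le (hεint.const_mul c) hbd
      _ = c * ((errA + Real.exp (-x)) * W) := by rw [integral_const_mul, hεval]
  -- final assembly
  rw [hZgEq, hZEq]
  set ZG := ∫ η in A, ∫ θ : EuclideanSpace ℝ (Fin p), Real.exp (f θ η) * g θ with hZGdef
  set Z := ∫ η in A, ∫ θ : EuclideanSpace ℝ (Fin p), Real.exp (f θ η) with hZdef
  clear_value Ns Gs c W D ZG Z
  have herrA0 : 0 ≤ errA := by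
    have h0 : 0 ≤ ∫ η in A, dia η * Real.exp (φ η + δ η) :=
      setIntegral_nonneg hA fun η hη => mul_nonneg (hdia η hη) (Real.exp_pos _).le
    rw [herrA]
    exact div_nonneg h0 hwpos.le
  have hΔg0 : 0 ≤ Δg := by rw [hΔg]; exact abs_nonneg _
  have hex : 0 < Real.exp (-x) := Real.exp_pos _
  have hρ : errA + Δg + Real.exp (-x) < 1 / 2 := by linarith
  have h1ρ : 0 < 1 - (errA + Δg + Real.exp (-x)) := by linarith
  have hDabs : |D| = Δg * W := by
    rw [hΔg, abs_div, abs_of_pos hwpos]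
    field_simp
  have hcW : 0 < c * W := mul_pos hc hwpos
  have hmono : c * ((errA + Real.exp (-x)) * W) ≤ c * W * (errA + Δg + Real.exp (-x)) := by
    have h0 : c * ((errA + Real.exp (-x)) * W) = c * W * (errA + Real.exp (-x)) := by ring
    rw [h0]
    exact mul_le_mul_of_nonneg_left (by linarith) hcW.le
  have hZlow : c * W * (1 - (errA + Δg + Real.exp (-x))) ≤ Z := by
    have h0 := (abs_le.1 hZ_est).1
    have h1 : c * W * (1 - (errA + Δg + Real.exp (-x)))
        = c * W - c * W * (errA + Δg + Real.exp (-x)) := by ring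
    linarith
  have hZpos : 0 < Z := lt_of_lt_of_le (mul_pos hcW h1ρ) hZlow
  have hnum : |ZG - (Gs / Ns) * Z| ≤ c * W * (2 * (errA + Δg + Real.exp (-x))) := by
    have hdec : ZG - (Gs / Ns) * Z
        = (ZG - c * ((Gs / Ns) * W + D)) + c * D + (Gs / Ns) * (c * W - Z) := by ring
    have htri : |ZG - (Gs / Ns) * Z|
        ≤ |ZG - c * ((Gs / Ns) * W + D)| + |c * D| + |(Gs / Ns) * (c * W - Z)| := by
      rw [hdec]; exact abs_add_three _ _ _
    have h1 : |c * D| = c * (Δg * W) := by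
      rw [abs_mul, abs_of_pos hc, hDabs]
    have h2 : |(Gs / Ns) * (c * W - Z)| ≤ 1 * (c * ((errA + Real.exp (-x)) * W)) := by
      rw [abs_mul]
      refine mul_le_mul hEs ?_ (abs_nonneg _) zero_le_one
      rw [abs_sub_comm]; exact hZ_est
    have h3 : c * (Δg * W) ≤ c * W * Δg + c * W * Δg := by
      have : c * (Δg * W) = c * W * Δg := by ring
      have h4 : 0 ≤ c * W * Δg := mul_nonneg hcW.le hΔg0
      linarith
    have h5 : c * ((errA + Real.exp (-x)) * W)
        = c * W * errA + c * W * Real.exp (-x) := by ring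
    have h6 : c * W * (2 * (errA + Δg + Real.exp (-x)))
        = 2 * (c * W * errA) + 2 * (c * W * Δg) + 2 * (c * W * Real.exp (-x)) := by ring
    have h7 : 0 ≤ c * W * Δg := mul_nonneg hcW.le hΔg0
    have h8 : c * (Δg * W) = c * W * Δg := by ring
    linarith [hZg_est, htri, h1, h2]
  have hden : 1 - errA - Δg - Real.exp (-x) = 1 - (errA + Δg + Real.exp (-x)) := by ring
  have hfrac : ZG / Z - Gs / Ns = (ZG - (Gs / Ns) * Z) / Z := by
    rw [sub_div, mul_div_assoc, div_self hZpos.ne', mul_one]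
  rw [hfrac, abs_div, abs_of_pos hZpos, hden, div_le_div_iff₀ hZpos h1ρ]
  have ha := mul_le_mul_of_nonneg_right hnum h1ρ.le
  have hb := mul_le_mul_of_nonneg_left hZlow
    (by positivity : (0:ℝ) ≤ 2 * (errA + Δg + Real.exp (-x)))
  calc |ZG - Gs / Ns * Z| * (1 - (errA + Δg + Real.exp (-x)))
      ≤ c * W * (2 * (errA + Δg + Real.exp (-x))) * (1 - (errA + Δg + Real.exp (-x))) := ha
    _ = 2 * (errA + Δg + Real.exp (-x)) * (c * W * (1 - (errA + Δg + Real.exp (-x)))) := by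
        ring
    _ ≤ 2 * (errA + Δg + Real.exp (-x)) * Z := hb
end

section
/- (Trace-norm bound under a Loewner sandwich, Lemma on discrepancy of precision blocks.) Let F be a symmetric positive definite p × p real matrix, G a symmetric p × p matrix, and 0 ≤ δ < 1 such that (1/(1 + δ)) F^{-1} ⪯ G ⪯ (1/(1 − δ)) F^{-1} in the Loewner order. Then for any k × p real matrix Q, the nuclear (trace) norm of the symmetric matrix Q (G − F^{-1}) Qᵀ satisfies ‖Q (G − F^{-1}) Qᵀ‖₁ ≤ (δ / (1 − δ)) · tr(Q F^{-1} Qᵀ), where ‖M‖₁ denotes the sum of the absolute values of the eigenvalues of the symmetric matrix M. -/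
open Matrix

/-- Trace-norm bound under a Loewner sandwich: if
`(1/(1+δ)) F⁻¹ ⪯ G ⪯ (1/(1−δ)) F⁻¹`, then for any `Q` the nuclear norm of
`Q (G − F⁻¹) Qᵀ` (sum of absolute values of its eigenvalues) is at most
`(δ/(1−δ)) tr (Q F⁻¹ Qᵀ)`. -/
theorem trace_norm_bound_loewner_sandwich
    (p k : ℕ)
    (F G : Matrix (Fin p) (Fin p) ℝ)
    (hF : F.PosDef) (hG : G.IsSymm)
    (δ : ℝ) (hδ0 : 0 ≤ δ) (hδ1 : δ < 1)
    (hlow : (G - (1 + δ)⁻¹ • F⁻¹).PosSemidef)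
    (hup : ((1 - δ)⁻¹ • F⁻¹ - G).PosSemidef)
    (Q : Matrix (Fin k) (Fin p) ℝ)
    (hH : (Q * (G - F⁻¹) * Qᵀ).IsHermitian) :
    (∑ i, |hH.eigenvalues i|) ≤ δ / (1 - δ) * (Q * F⁻¹ * Qᵀ).trace := by
  have h1δ : 0 < 1 - δ := by linarith
  set c : ℝ := δ / (1 - δ) with hc
  set v : Fin k → (Fin k → ℝ) := fun i => ⇑(hH.eigenvectorBasis i) with hv
  have hupper : ∀ w : Fin p → ℝ, w ⬝ᵥ ((G - F⁻¹) *ᵥ w) ≤ c * (w ⬝ᵥ (F⁻¹ *ᵥ w)) := by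
    intro w
    have h := hup.dotProduct_mulVec_nonneg w
    have hm : (1 - δ)⁻¹ • F⁻¹ - G = c • F⁻¹ - (G - F⁻¹) := by
      have h2 : (1 - δ)⁻¹ = c + 1 := by rw [hc]; field_simp; ring
      rw [h2]; module
    rw [hm] at h
    simp only [star_trivial, sub_mulVec, smul_mulVec, dotProduct_sub,
      dotProduct_smul, smul_eq_mul] at h ⊢
    linarith
  have hlower : ∀ w : Fin p → ℝ, -(c * (w ⬝ᵥ (F⁻¹ *ᵥ w))) ≤ w ⬝ᵥ ((G - F⁻¹) *ᵥ w) := by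
    intro w
    have h := hlow.dotProduct_mulVec_nonneg w
    have hFw : 0 ≤ w ⬝ᵥ (F⁻¹ *ᵥ w) := by simpa using hF.inv.posSemidef.dotProduct_mulVec_nonneg w
    have hm : G - (1 + δ)⁻¹ • F⁻¹ = (G - F⁻¹) + (δ / (1 + δ)) • F⁻¹ := by
      have h0 : (0:ℝ) < 1 + δ := by linarith
      have h2 : (1 + δ)⁻¹ = 1 - δ / (1 + δ) := by field_simp; ring
      rw [h2]; module
    rw [hm] at h
    simp only [star_trivial, add_mulVec, smul_mulVec, dotProduct_add,
      dotProduct_smul, smul_eq_mul, sub_mulVec, dotProduct_sub] at h ⊢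
    have hdc : δ / (1 + δ) ≤ c := by
      rw [hc]; apply div_le_div_of_nonneg_left hδ0 h1δ; linarith
    nlinarith
  have hconj : ∀ (B : Matrix (Fin p) (Fin p) ℝ) (x : Fin k → ℝ),
      x ⬝ᵥ ((Q * B * Qᵀ) *ᵥ x) = (Qᵀ *ᵥ x) ⬝ᵥ (B *ᵥ (Qᵀ *ᵥ x)) := by
    intro B x
    rw [← mulVec_mulVec, ← mulVec_mulVec, dotProduct_mulVec, ← mulVec_transpose]
  have heig : ∀ i, hH.eigenvalues i = v i ⬝ᵥ ((Q * (G - F⁻¹) * Qᵀ) *ᵥ v i) := by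
    intro i
    have := hH.eigenvalues_eq i
    simpa [hv] using this
  have hbound : ∀ i, |hH.eigenvalues i| ≤ c * (v i ⬝ᵥ ((Q * F⁻¹ * Qᵀ) *ᵥ v i)) := by
    intro i
    rw [heig i, hconj, hconj, abs_le]
    exact ⟨hlower _, hupper _⟩
  set U : Matrix (Fin k) (Fin k) ℝ := ↑(hH.eigenvectorUnitary) with hU
  have hUU : U * Uᴴ = 1 := mem_unitaryGroup_iff.mp hH.eigenvectorUnitary.2
  have hdiag : ∀ (A : Matrix (Fin k) (Fin k) ℝ) (j : Fin k),
      v j ⬝ᵥ (A *ᵥ v j) = (Uᴴ * A * U) j j := by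
    intro A j
    simp only [mul_apply, conjTranspose_apply, star_trivial, dotProduct, mulVec, hU,
      IsHermitian.eigenvectorUnitary_apply, hv, Finset.sum_mul, Finset.mul_sum]
    rw [Finset.sum_comm]
    exact Finset.sum_congr rfl fun i _ => Finset.sum_congr rfl fun l _ => by ring
  have htr : ∑ i, v i ⬝ᵥ ((Q * F⁻¹ * Qᵀ) *ᵥ v i) = (Q * F⁻¹ * Qᵀ).trace := by
    have : ∑ i, v i ⬝ᵥ ((Q * F⁻¹ * Qᵀ) *ᵥ v i) = (Uᴴ * (Q * F⁻¹ * Qᵀ) * U).trace := by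
      rw [trace]; exact Finset.sum_congr rfl fun j _ => hdiag _ j
    rw [this, trace_mul_cycle, hUU, one_mul]
  calc (∑ i, |hH.eigenvalues i|) ≤ ∑ i, c * (v i ⬝ᵥ ((Q * F⁻¹ * Qᵀ) *ᵥ v i)) :=
        Finset.sum_le_sum fun i _ => hbound i
    _ = c * (Q * F⁻¹ * Qᵀ).trace := by rw [← Finset.mul_sum, htr]
end
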